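/- For every Boolean function f : F_2^n → F_2, the nonlinearity satisfies N(f) ≤ 2^{n−1} − 2^{n/2−1}, where the right-hand side is interpreted as a real number (so the claim is (N(f) : ℝ) ≤ 2^{n−1} − 2^{(n/2)−1}). -/

import Mathlib

/-- The affine Boolean function `x ↦ a_0 + a_1 x_1 + … + a_n x_n` determined by the
coefficient vector `a ∈ F_2^{n+1}`. -/
def affineFun (n : ℕ) (a : Fin (n + 1) → ZMod 2) : (Fin n → ZMod 2) → ZMod 2 :=
  fun x => a 0 + ∑ i : Fin n, a i.succ * x i

/-- The nonlinearity of a Boolean function: the minimum Hamming distance from `f`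
to an affine Boolean function. -/
noncomputable def nonlinearity (n : ℕ) (f : (Fin n → ZMod 2) → ZMod 2) : ℕ :=
  sInf {d : ℕ | ∃ a : Fin (n + 1) → ZMod 2, d = hammingDist f (affineFun n a)}

open Finset


noncomputable def chi : AddChar (ZMod 2) ℝ where
  toFun u := (-1 : ℝ) ^ u.val
  map_zero_eq_one' := by norm_num
  map_add_eq_mul' := by
    intro a b
    show (-1:ℝ) ^ (a+b).val = (-1)^a.val * (-1)^b.val
    rw [ZMod.val_add, ← pow_add, ← neg_one_pow_eq_pow_mod_two]

lemma chi_one : chi 1 = -1 := by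
  show (-1:ℝ)^(1 : ZMod 2).val = -1
  rw [ZMod.val_one]; ring

lemma chi_eq (u : ZMod 2) : chi u = if u = 0 then 1 else -1 := by
  rcases (by decide : ∀ v : ZMod 2, v = 0 ∨ v = 1) u with rfl | rfl
  · simp
  · rw [if_neg (by decide)]; exact chi_one

lemma chi_sum {ι : Type*} (s : Finset ι) (g : ι → ZMod 2) :
    chi (∑ i ∈ s, g i) = ∏ i ∈ s, chi (g i) := by
  induction s using Finset.cons_induction with
  | empty => simp
  | cons i s hi ih => rw [sum_cons, prod_cons, AddChar.map_add_eq_mul, ih]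

lemma sum_chi (u : ZMod 2) : (∑ b : ZMod 2, chi (b * u)) = if u = 0 then 2 else 0 := by
  have h : (univ : Finset (ZMod 2)) = {0, 1} := by decide
  rw [h]
  rcases (by decide : ∀ v : ZMod 2, v = 0 ∨ v = 1) u with rfl | rfl <;> simp +decide [chi_eq]

lemma orth (n : ℕ) (z : Fin n → ZMod 2) :
    (∑ a : Fin n → ZMod 2, chi (∑ i, a i * z i)) = if z = 0 then (2:ℝ)^n else 0 := by
  have h1 : (∑ a : Fin n → ZMod 2, chi (∑ i, a i * z i))
      = ∑ a ∈ Fintype.piFinset (fun _ : Fin n => (univ : Finset (ZMod 2))),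
          ∏ i, chi (a i * z i) := by
    rw [Fintype.piFinset_univ]
    exact Finset.sum_congr rfl fun a _ => chi_sum univ fun i => a i * z i
  rw [h1, Finset.sum_prod_piFinset univ (fun i b => chi (b * z i))]
  by_cases hz : z = 0
  · subst hz; simp [sum_chi]
  · rw [if_neg hz]
    obtain ⟨j, hj⟩ : ∃ j, z j ≠ 0 := by
      by_contra h; push_neg at h; exact hz (funext h)
    exact Finset.prod_eq_zero (mem_univ j) (by rw [sum_chi, if_neg hj])

variable {n : ℕ}

/-- inner product -/
def ip (a x : Fin n → ZMod 2) : ZMod 2 := ∑ i, a i * x i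

noncomputable def W (f : (Fin n → ZMod 2) → ZMod 2) (a : Fin n → ZMod 2) : ℝ :=
  ∑ x : Fin n → ZMod 2, chi (f x + ip a x)

lemma parseval (f : (Fin n → ZMod 2) → ZMod 2) :
    ∑ a : Fin n → ZMod 2, W f a ^ 2 = (2:ℝ)^n * 2^n := by
  have key : ∀ a, W f a ^ 2 = ∑ x : Fin n → ZMod 2, ∑ y : Fin n → ZMod 2,
      chi (f x) * chi (f y) * chi (ip a (x + y)) := by
    intro a
    rw [sq, W, Finset.sum_mul_sum]
    refine Finset.sum_congr rfl fun x _ => Finset.sum_congr rfl fun y _ => ?_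
    rw [← AddChar.map_add_eq_mul]
    rw [show f x + ip a x + (f y + ip a y) = (f x + f y) + (ip a x + ip a y) by ring]
    have hip : ip a x + ip a y = ip a (x + y) := by
      simp only [ip, ← Finset.sum_add_distrib]
      exact Finset.sum_congr rfl fun i _ => by simp [mul_add]
    rw [hip, AddChar.map_add_eq_mul, AddChar.map_add_eq_mul]
  calc ∑ a : Fin n → ZMod 2, W f a ^ 2
      = ∑ x : Fin n → ZMod 2, ∑ y : Fin n → ZMod 2,
          chi (f x) * chi (f y) * (∑ a : Fin n → ZMod 2, chi (ip a (x + y))) := by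
        simp only [key]
        rw [Finset.sum_comm]
        refine Finset.sum_congr rfl fun x _ => ?_
        rw [Finset.sum_comm]
        refine Finset.sum_congr rfl fun y _ => ?_
        rw [Finset.mul_sum]
    _ = ∑ x : Fin n → ZMod 2, chi (f x) * chi (f x) * (2:ℝ)^n := by
        refine Finset.sum_congr rfl fun x _ => ?_
        have horth : ∀ y : Fin n → ZMod 2,
            (∑ a : Fin n → ZMod 2, chi (ip a (x + y))) = if x = y then (2:ℝ)^n else 0 := by
          intro y
          rw [show (∑ a : Fin n → ZMod 2, chi (ip a (x+y)))
              = ∑ a : Fin n → ZMod 2, chi (∑ i, a i * (x+y) i) from rfl, orth]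
          congr 1
          simp only [eq_iff_iff]
          constructor
          · intro h; funext i
            have h1 := congrFun h i
            simp only [Pi.add_apply, Pi.zero_apply] at h1
            rwa [← CharTwo.sub_eq_add, sub_eq_zero] at h1
          · intro h; subst h; funext i; simp [CharTwo.add_self_eq_zero]
        simp only [horth, mul_ite, mul_zero, Finset.sum_ite_eq, Finset.mem_univ, if_true]
    _ = (2:ℝ)^n * 2^n := by
        have : ∀ x : Fin n → ZMod 2, chi (f x) * chi (f x) = 1 := fun x => by
          rw [chi_eq]; split <;> norm_num
        simp only [this, one_mul, Finset.sum_const, Finset.card_univ]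
        simp [Fintype.card_fun]

lemma exists_big (f : (Fin n → ZMod 2) → ZMod 2) :
    ∃ a : Fin n → ZMod 2, (2:ℝ)^n ≤ W f a ^ 2 := by
  by_contra h
  push_neg at h
  have hlt : ∑ a : Fin n → ZMod 2, W f a ^ 2 <
      ∑ _a : Fin n → ZMod 2, (2:ℝ)^n :=
    Finset.sum_lt_sum_of_nonempty Finset.univ_nonempty (fun a _ => h a)
  rw [parseval] at hlt
  simp only [Finset.sum_const, Finset.card_univ, Fintype.card_fun, Fintype.card_fin,
    ZMod.card, nsmul_eq_mul] at hlt
  push_cast at hlt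
  linarith

lemma dist_formula (f : (Fin n → ZMod 2) → ZMod 2) (a : Fin n → ZMod 2) (c : ZMod 2) :
    chi c * W f a = (2:ℝ)^n - 2 * hammingDist f (affineFun n (Fin.cons c a)) := by
  set α := affineFun n (Fin.cons c a) with hα
  have hαx : ∀ x, α x = c + ip a x := by
    intro x
    simp [hα, affineFun, ip, Fin.cons_zero, Fin.cons_succ]
  have h1 : chi c * W f a = ∑ x : Fin n → ZMod 2, (if f x = α x then (1:ℝ) else -1) := by
    rw [W, Finset.mul_sum]
    refine Finset.sum_congr rfl fun x _ => ?_
    rw [← AddChar.map_add_eq_mul, chi_eq,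
      show c + (f x + ip a x) = f x + (c + ip a x) by ring,
      ← CharTwo.sub_eq_add]
    simp only [sub_eq_zero, ← hαx x]
  have h2 : ∑ x : Fin n → ZMod 2, (if f x = α x then (1:ℝ) else -1)
      = ((univ.filter fun x => f x = α x).card : ℝ)
        - ((univ.filter fun x => ¬ f x = α x).card : ℝ) := by
    rw [Finset.sum_ite, Finset.sum_const, Finset.sum_const]
    ring
  have hd : (hammingDist f α : ℝ) = ((univ.filter fun x => ¬ f x = α x).card : ℝ) := rfl
  have hcard : (univ.filter fun x => f x = α x).card
      + (univ.filter fun x => ¬ f x = α x).card = 2^n := by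
    rw [Finset.card_filter_add_card_filter_not, Finset.card_univ]
    simp [Fintype.card_fun]
  have hcard' : ((univ.filter fun x => f x = α x).card : ℝ)
      + ((univ.filter fun x => ¬ f x = α x).card : ℝ) = 2^n := by
    exact_mod_cast congrArg (Nat.cast : ℕ → ℝ) hcard
  rw [h1, h2, hd]
  linarith


/-- For every Boolean function `f : F_2^n → F_2`,
`N(f) ≤ 2^{n−1} − 2^{n/2−1}`, the right-hand side interpreted as a real number. -/
theorem stmt13 (n : ℕ) (f : (Fin n → ZMod 2) → ZMod 2) :
    (nonlinearity n f : ℝ) ≤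
      (2 : ℝ) ^ ((n : ℝ) - 1) - (2 : ℝ) ^ ((n : ℝ) / 2 - 1) := by
  obtain ⟨a, ha⟩ := exists_big f
  have habs : (2:ℝ)^((n:ℝ)/2) ≤ |W f a| := by
    have h0 : (2:ℝ)^((n:ℝ)/2) = Real.sqrt ((2:ℝ)^n) := by
      rw [Real.sqrt_eq_rpow, ← Real.rpow_natCast 2 n,
        ← Real.rpow_mul (by norm_num : (0:ℝ) ≤ 2)]
      congr 1; ring
    rw [h0, ← Real.sqrt_sq_eq_abs]
    exact Real.sqrt_le_sqrt ha
  set c : ZMod 2 := if 0 ≤ W f a then 0 else 1 with hc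
  have hchi : chi c * W f a = |W f a| := by
    by_cases h : 0 ≤ W f a
    · rw [hc, if_pos h, AddChar.map_zero_eq_one, abs_of_nonneg h, one_mul]
    · rw [hc, if_neg h, chi_one, abs_of_neg (lt_of_not_ge h)]; ring
  have hdist := dist_formula f a c
  rw [hchi] at hdist
  have hnl : (nonlinearity n f : ℝ)
      ≤ (hammingDist f (affineFun n (Fin.cons c a)) : ℝ) := by
    have hmem : hammingDist f (affineFun n (Fin.cons c a)) ∈
        {d : ℕ | ∃ a' : Fin (n+1) → ZMod 2, d = hammingDist f (affineFun n a')} :=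
      ⟨Fin.cons c a, rfl⟩
    exact_mod_cast Nat.cast_le.mpr (Nat.sInf_le hmem)
  have e1 : (2:ℝ)^((n:ℝ)-1) = 2^(n:ℝ)/2 := by
    rw [Real.rpow_sub (by norm_num), Real.rpow_one]
  have e2 : (2:ℝ)^((n:ℝ)/2-1) = 2^((n:ℝ)/2)/2 := by
    rw [Real.rpow_sub (by norm_num), Real.rpow_one]
  have e3 : (2:ℝ)^(n:ℝ) = 2^n := Real.rpow_natCast 2 n
  rw [e1, e2, e3]
  linarith
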